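/- Let a_i = 2^{−i} · ∏_{j=i+1}^{∞} (1 − 2^{−j}) for each natural number i ≥ 0. Then ∑_{i=0}^{∞} i · a_i = c₀, where c₀ = ∑_{i=1}^{∞} 1/(2^i − 1) is the Erdős–Borwein constant. -/

import Mathlib

open Filter Topology Finset


/-- `a i = 2^{−i} · ∏_{j=i+1}^{∞} (1 − 2^{−j})`, the infinite product taken over all
integers `j ≥ i + 1` (indexed by `j ↦ j + i + 1` over `ℕ`). -/
noncomputable def a (i : ℕ) : ℝ :=
  (2 : ℝ) ^ (-(i : ℤ)) * ∏' j : ℕ, (1 - (2 : ℝ) ^ (-((j : ℤ) + (i : ℤ) + 1)))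

/-- The Erdős–Borwein constant `c₀ = ∑_{i=1}^{∞} 1/(2^i − 1)`
(indexed by `i ↦ i + 1` over `ℕ`). -/
noncomputable def c₀ : ℝ := ∑' i : ℕ, 1 / ((2 : ℝ) ^ (i + 1) - 1)

namespace Uchi

noncomputable def F (i : ℕ) : ℝ := ∏' j : ℕ, (1 - (2 : ℝ)⁻¹ ^ (j + i + 1))

lemma hq0 : (0:ℝ) < 2⁻¹ := by norm_num
lemma hq1 : (2⁻¹:ℝ) < 1 := by norm_num

lemma pow_le_half {n : ℕ} : ((2:ℝ)⁻¹) ^ (n+1) ≤ 2⁻¹ := by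
  calc ((2:ℝ)⁻¹) ^ (n+1) ≤ (2⁻¹:ℝ)^1 := pow_le_pow_of_le_one (by norm_num) (by norm_num) (by omega)
  _ = 2⁻¹ := pow_one _

lemma pow_pos' (n : ℕ) : (0:ℝ) < (2⁻¹:ℝ)^n := pow_pos hq0 n

lemma sum_geom_shift : ∑' n : ℕ, ((2:ℝ)⁻¹)^(n+1) = 1 := by
  have : ∀ n:ℕ, ((2:ℝ)⁻¹)^(n+1) = (2⁻¹:ℝ)^n * 2⁻¹ := fun n => pow_succ _ _
  rw [tsum_congr this, tsum_mul_right, tsum_geometric_of_lt_one (le_of_lt hq0) hq1]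
  norm_num

lemma summable_geom_shift : Summable (fun n : ℕ => ((2:ℝ)⁻¹)^(n+1)) := by
  have := summable_geometric_of_lt_one (le_of_lt hq0) hq1
  exact (summable_nat_add_iff 1).2 this

/-- master lemma about infinite products of `1 - t n` with `t n ≤ 2⁻¹^(n+1)` -/
lemma master {t : ℕ → ℝ} (h0 : ∀ n, 0 ≤ t n) (h1 : ∀ n, t n ≤ (2⁻¹:ℝ)^(n+1)) :
    Multipliable (fun n => 1 - t n) ∧ 0 < ∏' n, (1 - t n) ∧ ∏' n, (1 - t n) ≤ 1 := by
  have hpos : ∀ n, (0:ℝ) < 1 - t n := by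
    intro n
    have := (h1 n).trans pow_le_half
    linarith
  have hlog : Summable (fun n => Real.log (1 - t n)) := by
    rw [← summable_neg_iff]
    apply Summable.of_nonneg_of_le (fun n => ?_) (fun n => ?_)
      (summable_geom_shift.mul_left 2)
    · have : Real.log (1 - t n) ≤ 0 := Real.log_nonpos (by linarith [hpos n, h0 n]) (by linarith [h0 n])
      linarith
    · have h2 : (1 - t n)⁻¹ ≤ 1 + 2 * t n := by
        rw [inv_le_iff_one_le_mul₀ (hpos n)]
        have := (h1 n).trans pow_le_half
        nlinarith [h0 n]
      have h3 : Real.log ((1 - t n)⁻¹) ≤ (1 - t n)⁻¹ - 1 :=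
        Real.log_le_sub_one_of_pos (inv_pos.2 (hpos n))
      rw [Real.log_inv] at h3
      have := h1 n
      nlinarith
  have hmult : Multipliable (fun n => 1 - t n) := by
    exact Real.multipliable_of_summable_log (f := fun n => 1 - t n)
      (fun n => hpos n) hlog
  refine ⟨hmult, ?_, ?_⟩
  · have := (Real.rexp_tsum_eq_tprod (f := fun n => 1 - t n)
      (fun n => hpos n) hlog)
    have h := this
    rw [← h]
    exact Real.exp_pos _
  · have := (Real.rexp_tsum_eq_tprod (f := fun n => 1 - t n)
      (fun n => hpos n) hlog)
    have h := this
    rw [← h, Real.exp_le_one_iff]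
    apply tsum_nonpos
    intro n
    exact Real.log_nonpos (by linarith [hpos n, h0 n]) (by linarith [h0 n])

lemma F_t (i : ℕ) : ∀ n : ℕ, ((2:ℝ)⁻¹ ^ (n + i + 1) : ℝ) ≤ (2⁻¹:ℝ)^(n+1) := by
  intro n
  apply pow_le_pow_of_le_one (by norm_num) (by norm_num) (by omega)

lemma F_master (i : ℕ) : Multipliable (fun j : ℕ => 1 - (2:ℝ)⁻¹ ^ (j + i + 1)) ∧
    0 < F i ∧ F i ≤ 1 :=
  master (fun n => le_of_lt (pow_pos' _)) (F_t i)

lemma F_pos (i : ℕ) : 0 < F i := (F_master i).2.1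
lemma F_le_one (i : ℕ) : F i ≤ 1 := (F_master i).2.2

lemma F_succ (i : ℕ) : F i = (1 - (2:ℝ)⁻¹ ^ (i + 1)) * F (i + 1) := by
  have hm : Multipliable (fun n : ℕ => 1 - (2:ℝ)⁻¹ ^ ((n+1) + i + 1)) := by
    have := (F_master (i+1)).1
    apply this.congr
    intro n
    ring_nf
  have := tprod_eq_zero_mul' (f := fun j : ℕ => 1 - (2:ℝ)⁻¹ ^ (j + i + 1)) hm
  rw [F, this]
  congr 1
  · norm_num
  · rw [F]
    apply tprod_congr
    intro n
    ring_nf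

noncomputable def S (x : ℝ) : ℝ := ∑' i : ℕ, (2:ℝ)⁻¹ ^ i * F i * x ^ i

lemma term_nonneg {x : ℝ} (hx : 0 ≤ x) (i : ℕ) : 0 ≤ (2:ℝ)⁻¹ ^ i * F i * x ^ i := by
  have := F_pos i; positivity

lemma term_le {x : ℝ} (hx0 : 0 ≤ x) (hx1 : x ≤ 1) (i : ℕ) :
    (2:ℝ)⁻¹ ^ i * F i * x ^ i ≤ (2:ℝ)⁻¹ ^ i := by
  have h1 := F_pos i
  have h2 := F_le_one i
  have h3 : x ^ i ≤ 1 := pow_le_one₀ hx0 hx1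
  have h4 : (0:ℝ) ≤ x ^ i := pow_nonneg hx0 i
  have h5 : F i * x ^ i ≤ 1 := mul_le_one₀ h2 h4 h3
  nlinarith [pow_pos' i]

lemma summable_S {x : ℝ} (hx0 : 0 ≤ x) (hx1 : x ≤ 1) :
    Summable (fun i : ℕ => (2:ℝ)⁻¹ ^ i * F i * x ^ i) :=
  Summable.of_nonneg_of_le (term_nonneg hx0) (term_le hx0 hx1)
    (summable_geometric_of_lt_one (le_of_lt hq0) hq1)

/-- functional equation -/
lemma S_funceq {x : ℝ} (hx0 : 0 ≤ x) (hx1 : x ≤ 1) : S (x * 2⁻¹) = (1 - x * 2⁻¹) * S x := by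
  have hs1 : Summable (fun i : ℕ => (2:ℝ)⁻¹ ^ i * F i * x ^ i) := summable_S hx0 hx1
  have hs2 : Summable (fun i : ℕ => (2:ℝ)⁻¹ ^ i * F i * (x * 2⁻¹) ^ i) :=
    summable_S (by positivity) (by nlinarith)
  have key : S x - S (x * 2⁻¹) = (x * 2⁻¹) * S x := by
    rw [S, S, ← Summable.tsum_sub hs1 hs2]
    have hterm : ∀ i : ℕ, (2:ℝ)⁻¹ ^ i * F i * x ^ i - (2:ℝ)⁻¹ ^ i * F i * (x * 2⁻¹) ^ i
        = (2:ℝ)⁻¹ ^ i * F i * x ^ i * (1 - (2⁻¹:ℝ)^i) := by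
      intro i; rw [mul_pow]; ring
    rw [tsum_congr hterm]
    have hsg : Summable (fun i : ℕ => (2:ℝ)⁻¹ ^ i * F i * x ^ i * (1 - (2⁻¹:ℝ)^i)) := by
      exact (hs1.sub hs2).congr (fun i => hterm i)
    rw [Summable.tsum_eq_zero_add hsg]
    simp only [pow_zero, sub_self, mul_zero, zero_add]
    have hshift : ∀ i : ℕ, (2:ℝ)⁻¹ ^ (i+1) * F (i+1) * x ^ (i+1) * (1 - (2⁻¹:ℝ)^(i+1))
        = (x * 2⁻¹) * ((2:ℝ)⁻¹ ^ i * F i * x ^ i) := by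
      intro i
      rw [F_succ i]
      ring
    rw [tsum_congr hshift, tsum_mul_left]
  linarith [key]

lemma xqN_mem {x : ℝ} (hx0 : 0 ≤ x) (hx1 : x ≤ 1) (N : ℕ) :
    0 ≤ x * (2⁻¹:ℝ)^N ∧ x * (2⁻¹:ℝ)^N ≤ 1 := by
  constructor
  · positivity
  · have := pow_le_one₀ (le_of_lt hq0) (le_of_lt hq1) (n := N)
    nlinarith [pow_pos' N]

lemma S_iter {x : ℝ} (hx0 : 0 ≤ x) (hx1 : x ≤ 1) (N : ℕ) :
    S (x * (2⁻¹:ℝ)^N) = S x * ∏ n ∈ range N, (1 - x * (2⁻¹:ℝ)^(n+1)) := by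
  induction N with
  | zero => simp
  | succ N ih =>
    have h := S_funceq (x := x * (2⁻¹:ℝ)^N) (xqN_mem hx0 hx1 N).1 (xqN_mem hx0 hx1 N).2
    have e1 : x * (2⁻¹:ℝ)^N * 2⁻¹ = x * (2⁻¹:ℝ)^(N+1) := by ring
    rw [e1] at h
    rw [h, ih, prod_range_succ]
    ring

noncomputable def Q (x : ℝ) : ℝ := ∏' n : ℕ, (1 - x * (2:ℝ)⁻¹ ^ (n+1))

lemma Q_master {x : ℝ} (hx0 : 0 ≤ x) (hx1 : x ≤ 1) :
    Multipliable (fun n : ℕ => 1 - x * (2:ℝ)⁻¹ ^ (n+1)) ∧ 0 < Q x ∧ Q x ≤ 1 :=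
  by
  rw [Q]
  exact master (t := fun n => x * (2:ℝ)⁻¹ ^ (n+1))
    (fun n => mul_nonneg hx0 (le_of_lt (pow_pos' (n+1))))
    (fun n => mul_le_of_le_one_left (le_of_lt (pow_pos' (n+1))) hx1)

lemma summable_tail {y : ℝ} (hy0 : 0 ≤ y) (hy1 : y ≤ 1) :
    Summable (fun i : ℕ => (2:ℝ)⁻¹ ^ (i+1) * F (i+1) * y ^ (i+1)) := by
  apply Summable.of_nonneg_of_le (fun i => term_nonneg hy0 (i+1))
    (fun i => (term_le hy0 hy1 (i+1))) summable_geom_shift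

/-- `S y` is within `y` of `F 0`. -/
lemma S_near {y : ℝ} (hy0 : 0 ≤ y) (hy1 : y ≤ 1) : F 0 ≤ S y ∧ S y ≤ F 0 + y := by
  have hs := summable_S hy0 hy1
  have h0 : S y = F 0 + ∑' i : ℕ, (2:ℝ)⁻¹ ^ (i+1) * F (i+1) * y ^ (i+1) := by
    rw [S, Summable.tsum_eq_zero_add hs]; simp only [pow_zero, one_mul, mul_one]
  have htail_nonneg : (0:ℝ) ≤ ∑' i : ℕ, (2:ℝ)⁻¹ ^ (i+1) * F (i+1) * y ^ (i+1) :=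
    tsum_nonneg (fun i => term_nonneg hy0 (i+1))
  have htail_le : ∑' i : ℕ, (2:ℝ)⁻¹ ^ (i+1) * F (i+1) * y ^ (i+1)
      ≤ ∑' i : ℕ, (2:ℝ)⁻¹ ^ (i+1) * y := by
    apply Summable.tsum_le_tsum _ (summable_tail hy0 hy1) (summable_geom_shift.mul_right y)
    intro i
    have h2 := F_le_one (i+1)
    have h1 := F_pos (i+1)
    have h3 : y ^ (i+1) ≤ y := by
      calc y^(i+1) ≤ y^1 := pow_le_pow_of_le_one hy0 hy1 (by omega)
      _ = y := pow_one y
    have h4 : (0:ℝ) ≤ y ^ (i+1) := pow_nonneg hy0 _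
    nlinarith [pow_pos' (i+1), mul_le_of_le_one_left h4 h2]
  have : ∑' i : ℕ, (2:ℝ)⁻¹ ^ (i+1) * y = y := by
    rw [tsum_mul_right, sum_geom_shift, one_mul]
  constructor
  · linarith
  · linarith [htail_le, this ▸ htail_le]

lemma SQ_eq {x : ℝ} (hx0 : 0 ≤ x) (hx1 : x ≤ 1) : S x * Q x = F 0 := by
  have hQ := (Q_master hx0 hx1).1
  have h1 : Tendsto (fun N => S x * ∏ n ∈ range N, (1 - x * (2⁻¹:ℝ)^(n+1))) atTop
      (𝓝 (S x * Q x)) := (hQ.hasProd.tendsto_prod_nat).const_mul (S x)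
  have h2 : Tendsto (fun N => S (x * (2⁻¹:ℝ)^N)) atTop (𝓝 (F 0)) := by
    apply tendsto_of_tendsto_of_tendsto_of_le_of_le' tendsto_const_nhds
      (g := fun _ => F 0) (h := fun N => F 0 + x * (2⁻¹:ℝ)^N)
    · have : Tendsto (fun N : ℕ => x * (2⁻¹:ℝ)^N) atTop (𝓝 0) := by
        simpa using (tendsto_pow_atTop_nhds_zero_of_lt_one (le_of_lt hq0) hq1).const_mul x
      simpa using tendsto_const_nhds.add this
    · exact Eventually.of_forall (fun N => (S_near (xqN_mem hx0 hx1 N).1 (xqN_mem hx0 hx1 N).2).1)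
    · exact Eventually.of_forall (fun N => (S_near (xqN_mem hx0 hx1 N).1 (xqN_mem hx0 hx1 N).2).2)
  have h3 : Tendsto (fun N => S (x * (2⁻¹:ℝ)^N)) atTop (𝓝 (S x * Q x)) := by
    apply h1.congr
    intro N
    exact (S_iter hx0 hx1 N).symm
  exact tendsto_nhds_unique h3 h2

lemma F0_eq_Q1 : F 0 = Q 1 := by
  rw [F, Q]
  apply tprod_congr
  intro n
  norm_num

lemma S_one : S 1 = 1 := by
  have h := SQ_eq (x := 1) (by norm_num) (le_refl 1)
  rw [F0_eq_Q1] at h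
  have hQ := (Q_master (x := 1) (by norm_num) (le_refl 1)).2.1
  have h2 : S 1 * Q 1 = 1 * Q 1 := by rw [h, one_mul]
  exact mul_right_cancel₀ (ne_of_gt hQ) h2

lemma weier_lower (u : ℕ → ℝ) (h0 : ∀ n, 0 ≤ u n) (h1 : ∀ n, u n ≤ 1) (N : ℕ) :
    1 - ∑ n ∈ range N, u n ≤ ∏ n ∈ range N, (1 - u n) := by
  induction N with
  | zero => simp
  | succ N ih =>
    rw [prod_range_succ, sum_range_succ]
    have hs : 0 ≤ ∑ n ∈ range N, u n := sum_nonneg fun n _ => h0 n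
    nlinarith [mul_le_mul_of_nonneg_right ih (by linarith [h1 N] : (0:ℝ) ≤ 1 - u N),
      mul_nonneg hs (h0 N)]

lemma weier_upper (u : ℕ → ℝ) (h0 : ∀ n, 0 ≤ u n) (h1 : ∀ n, u n ≤ 1) (N : ℕ) :
    ∏ n ∈ range N, (1 - u n) ≤ 1 - (∑ n ∈ range N, u n) + (∑ n ∈ range N, u n)^2 := by
  induction N with
  | zero => simp
  | succ N ih =>
    rw [prod_range_succ, sum_range_succ]
    have hs : 0 ≤ ∑ n ∈ range N, u n := sum_nonneg fun n _ => h0 n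
    have h2 : (0:ℝ) ≤ 1 - u N := by linarith [h1 N]
    nlinarith [mul_le_mul_of_nonneg_right ih h2, mul_nonneg hs (h0 N),
      mul_nonneg (mul_nonneg hs hs) (h0 N), mul_nonneg (h0 N) (h0 N)]

noncomputable def u (x : ℝ) (n : ℕ) : ℝ :=
  (1 - x) * (2:ℝ)⁻¹ ^ (n+1) / (1 - x * (2:ℝ)⁻¹ ^ (n+1))

lemma denom_bound {x : ℝ} (hx0 : 0 ≤ x) (hx1 : x ≤ 1) (n : ℕ) :
    (2⁻¹:ℝ) ≤ 1 - x * (2:ℝ)⁻¹ ^ (n+1) ∧ 1 - x * (2:ℝ)⁻¹ ^ (n+1) ≤ 1 := by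
  have h1 : x * (2:ℝ)⁻¹ ^ (n+1) ≤ (2:ℝ)⁻¹ ^ (n+1) :=
    mul_le_of_le_one_left (le_of_lt (pow_pos' (n+1))) hx1
  have h2 := pow_le_half (n := n)
  have h3 : 0 ≤ x * (2:ℝ)⁻¹ ^ (n+1) := mul_nonneg hx0 (le_of_lt (pow_pos' (n+1)))
  constructor <;> linarith

lemma u_nonneg {x : ℝ} (hx0 : 0 ≤ x) (hx1 : x ≤ 1) (n : ℕ) : 0 ≤ u x n := by
  have hd := (denom_bound hx0 hx1 n).1
  apply div_nonneg _ (by linarith)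
  have := pow_pos' (n+1)
  nlinarith

lemma u_le {x : ℝ} (hx0 : 0 ≤ x) (hx1 : x ≤ 1) (n : ℕ) :
    u x n ≤ 2 * ((1 - x) * (2:ℝ)⁻¹ ^ (n+1)) := by
  have hd := (denom_bound hx0 hx1 n).1
  rw [u, div_le_iff₀ (by linarith)]
  have hnum : 0 ≤ (1 - x) * (2:ℝ)⁻¹ ^ (n+1) := mul_nonneg (by linarith) (le_of_lt (pow_pos' (n+1)))
  nlinarith

lemma u_le_one {x : ℝ} (hx0 : 0 ≤ x) (hx1 : x ≤ 1) (n : ℕ) : u x n ≤ 1 := by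
  have h := u_le hx0 hx1 n
  have h2 := pow_le_half (n := n)
  have h3 := pow_pos' (n+1)
  nlinarith

lemma one_sub_u {x : ℝ} (hx0 : 0 ≤ x) (hx1 : x ≤ 1) (n : ℕ) :
    1 - u x n = (1 - (2:ℝ)⁻¹ ^ (n+1)) / (1 - x * (2:ℝ)⁻¹ ^ (n+1)) := by
  have hd := (denom_bound hx0 hx1 n).1
  rw [u]
  set A : ℝ := (2:ℝ)⁻¹ ^ (n+1) with hA
  clear_value A
  have hD : (1:ℝ) - x * A ≠ 0 := by linarith
  field_simp
  ring

lemma summable_u {x : ℝ} (hx0 : 0 ≤ x) (hx1 : x ≤ 1) : Summable (u x) :=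
  Summable.of_nonneg_of_le (u_nonneg hx0 hx1) (u_le hx0 hx1)
    ((summable_geom_shift.mul_left (1-x)).mul_left 2)

noncomputable def σ (x : ℝ) : ℝ := ∑' n : ℕ, u x n

noncomputable def c₀' : ℝ := ∑' n : ℕ, (2:ℝ)⁻¹^(n+1) / (1 - (2:ℝ)⁻¹^(n+1))

lemma c0'_term_nonneg (n : ℕ) : 0 ≤ (2:ℝ)⁻¹^(n+1) / (1 - (2:ℝ)⁻¹^(n+1)) := by
  have h2 := pow_le_half (n := n)
  have h3 := pow_pos' (n+1)
  apply div_nonneg <;> linarith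

lemma c0'_term_le (n : ℕ) : (2:ℝ)⁻¹^(n+1) / (1 - (2:ℝ)⁻¹^(n+1)) ≤ 2 * (2:ℝ)⁻¹^(n+1) := by
  have h2 := pow_le_half (n := n)
  have h3 := pow_pos' (n+1)
  rw [div_le_iff₀ (by linarith)]
  nlinarith

lemma summable_c0' : Summable (fun n : ℕ => (2:ℝ)⁻¹^(n+1) / (1 - (2:ℝ)⁻¹^(n+1))) :=
  Summable.of_nonneg_of_le c0'_term_nonneg c0'_term_le (summable_geom_shift.mul_left 2)

lemma c0'_nonneg : 0 ≤ c₀' := tsum_nonneg c0'_term_nonneg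

lemma c0'_le_two : c₀' ≤ 2 := by
  have := Summable.tsum_le_tsum c0'_term_le summable_c0' (summable_geom_shift.mul_left 2)
  rw [tsum_mul_left, sum_geom_shift] at this
  simpa [c₀'] using this

lemma sigma_le {x : ℝ} (hx0 : 0 ≤ x) (hx1 : x ≤ 1) : σ x ≤ (1 - x) * c₀' := by
  rw [σ, c₀', ← tsum_mul_left]
  apply Summable.tsum_le_tsum _ (summable_u hx0 hx1) (summable_c0'.mul_left (1-x))
  intro n
  have hd1 := pow_le_half (n := n)
  have hd2 := (denom_bound hx0 hx1 n).1
  have h3 := pow_pos' (n+1)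
  rw [u, mul_div_assoc]
  apply mul_le_mul_of_nonneg_left _ (by linarith)
  apply div_le_div_of_nonneg_left (le_of_lt h3) (by linarith) (by nlinarith)

lemma sigma_nonneg {x : ℝ} (hx0 : 0 ≤ x) (hx1 : x ≤ 1) : 0 ≤ σ x :=
  tsum_nonneg (u_nonneg hx0 hx1)

lemma summable_geom4 : Summable (fun n : ℕ => ((4:ℝ)⁻¹)^(n+1)) := by
  have := summable_geometric_of_lt_one (by norm_num : (0:ℝ) ≤ 4⁻¹) (by norm_num)
  exact (summable_nat_add_iff 1).2 this

lemma sum_geom4 : ∑' n : ℕ, ((4:ℝ)⁻¹)^(n+1) = 3⁻¹ := by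
  have : ∀ n:ℕ, ((4:ℝ)⁻¹)^(n+1) = (4⁻¹:ℝ)^n * 4⁻¹ := fun n => pow_succ _ _
  rw [tsum_congr this, tsum_mul_right,
    tsum_geometric_of_lt_one (by norm_num) (by norm_num : (4:ℝ)⁻¹ < 1)]
  norm_num

lemma sigma_ge {x : ℝ} (hx0 : 0 ≤ x) (hx1 : x ≤ 1) :
    (1 - x) * c₀' - (4/3) * (1-x)^2 ≤ σ x := by
  have key : ∀ n : ℕ, (1-x) * ((2:ℝ)⁻¹^(n+1) / (1 - (2:ℝ)⁻¹^(n+1)))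
      ≤ u x n + (1-x)^2 * (4 * (4:ℝ)⁻¹^(n+1)) := by
    intro n
    set A : ℝ := (2:ℝ)⁻¹^(n+1) with hA
    have hd1 : A ≤ 2⁻¹ := pow_le_half
    have hd2 : (2⁻¹:ℝ) ≤ 1 - x * A := (denom_bound hx0 hx1 n).1
    have h3 : 0 < A := pow_pos' (n+1)
    have hq4 : ((4:ℝ)⁻¹)^(n+1) = A * A := by rw [hA, ← mul_pow]; norm_num
    have e : (1-x) * (A/(1-A)) - u x n = (1-x)^2 * A^2 / ((1-A)*(1-x*A)) := by
      rw [u, ← hA]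
      clear_value A
      have hD1 : (1:ℝ) - A ≠ 0 := by linarith
      have hD2 : (1:ℝ) - x * A ≠ 0 := by linarith
      field_simp
      ring
    have hkey : (1:ℝ) ≤ 4 * ((1-A)*(1-x*A)) := by nlinarith
    have hbound : (1-x)^2 * A^2 / ((1-A)*(1-x*A)) ≤ (1-x)^2 * (4 * (A*A)) := by
      rw [div_le_iff₀ (by nlinarith)]
      have hnn : (0:ℝ) ≤ ((1-x)*A)^2 * (4*((1-A)*(1-x*A)) - 1) :=
        mul_nonneg (sq_nonneg _) (by linarith)
      nlinarith [hnn]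
    rw [hq4]
    linarith [e ▸ hbound]
  have hs2 : Summable (fun n : ℕ => u x n + (1-x)^2 * (4 * (4:ℝ)⁻¹^(n+1))) :=
    (summable_u hx0 hx1).add ((summable_geom4.mul_left 4).mul_left ((1-x)^2))
  have hsum := Summable.tsum_le_tsum key ((summable_c0'.mul_left (1-x))) hs2
  rw [tsum_mul_left] at hsum
  rw [Summable.tsum_add (summable_u hx0 hx1) ((summable_geom4.mul_left 4).mul_left ((1-x)^2)),
    tsum_mul_left, tsum_mul_left, sum_geom4] at hsum
  rw [σ] at *
  rw [c₀']
  linarith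

lemma F0_tendsto : Tendsto (fun N => ∏ n ∈ range N, (1 - (2:ℝ)⁻¹^(n+1))) atTop (𝓝 (F 0)) := by
  have h : Multipliable (fun j : ℕ => 1 - (2:ℝ)⁻¹ ^ (j + 0 + 1)) := (F_master 0).1
  have := h.hasProd.tendsto_prod_nat
  exact this

lemma S_eq_div {x : ℝ} (hx0 : 0 ≤ x) (hx1 : x ≤ 1) : S x = F 0 / Q x :=
  (eq_div_iff (ne_of_gt (Q_master hx0 hx1).2.1)).2 (SQ_eq hx0 hx1)

lemma S_bounds {x : ℝ} (hx0 : 0 ≤ x) (hx1 : x ≤ 1) :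
    1 - σ x ≤ S x ∧ S x ≤ 1 - σ x + (σ x)^2 := by
  have hQm := Q_master hx0 hx1
  have hprod_eq : ∀ N : ℕ, ∏ n ∈ range N, (1 - u x n)
      = (∏ n ∈ range N, (1 - (2:ℝ)⁻¹^(n+1))) / (∏ n ∈ range N, (1 - x*(2:ℝ)⁻¹^(n+1))) := by
    intro N
    rw [← prod_div_distrib]
    exact prod_congr rfl fun n _ => one_sub_u hx0 hx1 n
  have hQt : Tendsto (fun N => ∏ n ∈ range N, (1 - x*(2:ℝ)⁻¹^(n+1))) atTop (𝓝 (Q x)) :=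
    hQm.1.hasProd.tendsto_prod_nat
  have hratio : Tendsto (fun N => ∏ n ∈ range N, (1 - u x n)) atTop (𝓝 (S x)) := by
    rw [S_eq_div hx0 hx1]
    exact (F0_tendsto.div hQt (ne_of_gt hQm.2.1)).congr fun N => (hprod_eq N).symm
  have hσt : Tendsto (fun N => ∑ n ∈ range N, u x n) atTop (𝓝 (σ x)) :=
    (summable_u hx0 hx1).hasSum.tendsto_sum_nat
  constructor
  · exact le_of_tendsto_of_tendsto' (tendsto_const_nhds.sub hσt) hratio
      (fun N => weier_lower (u x) (u_nonneg hx0 hx1) (u_le_one hx0 hx1) N)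
  · exact le_of_tendsto_of_tendsto' hratio ((tendsto_const_nhds.sub hσt).add (hσt.pow 2))
      (fun N => weier_upper (u x) (u_nonneg hx0 hx1) (u_le_one hx0 hx1) N)

lemma summable_one_sub_pow {x : ℝ} (hx0 : 0 ≤ x) (hx1 : x ≤ 1) :
    Summable (fun i : ℕ => (2:ℝ)⁻¹^i * F i * (1 - x^i)) := by
  have h1 := summable_S (x := 1) (by norm_num) (le_refl 1)
  have h2 := summable_S hx0 hx1
  apply (h1.sub h2).congr
  intro i
  rw [one_pow]
  ring

lemma one_sub_S_eq {x : ℝ} (hx0 : 0 ≤ x) (hx1 : x ≤ 1) :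
    1 - S x = ∑' i : ℕ, (2:ℝ)⁻¹^i * F i * (1 - x^i) := by
  have h1 := summable_S (x := 1) (by norm_num) (le_refl 1)
  have h2 := summable_S hx0 hx1
  conv_lhs => rw [← S_one]
  rw [S, S, ← Summable.tsum_sub h1 h2]
  exact tsum_congr fun i => by rw [one_pow]; ring

lemma geom_below {x : ℝ} (hx0 : 0 ≤ x) (hx1 : x ≤ 1) (i : ℕ) :
    (1 - x) * i * x^i ≤ 1 - x^i := by
  induction i with
  | zero => simp
  | succ i ih =>
    have h1 : x^(i+1) = x^i * x := pow_succ x i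
    have h2 : (0:ℝ) ≤ x^i := pow_nonneg hx0 i
    have h3 : x^i ≤ 1 := pow_le_one₀ hx0 hx1
    push_cast
    push_cast at ih
    rw [h1]
    have hA := mul_le_mul_of_nonneg_right ih hx0
    have hpx : x^i * x ≤ 1 := mul_le_one₀ h3 hx0 hx1
    have hB : 0 ≤ (1-x) * (1 - x^i*x) := mul_nonneg (by linarith) (by linarith)
    nlinarith [hA, hB]

lemma bernoulli_above {x : ℝ} (hx0 : 0 ≤ x) (hx1 : x ≤ 1) (i : ℕ) :
    1 - x^i ≤ i * (1 - x) := by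
  have h := one_add_mul_le_pow (a := x - 1) (by linarith) i
  have : 1 + (i:ℝ) * (x - 1) ≤ x ^ i := by
    calc 1 + (i:ℝ) * (x-1) ≤ (1 + (x-1))^i := h
    _ = x ^ i := by ring_nf
  linarith

lemma ia_nonneg (i : ℕ) : 0 ≤ (i:ℝ) * ((2:ℝ)⁻¹^i * F i) := by
  have h1 := F_pos i
  have h2 := pow_pos' i
  positivity

lemma partial_le (N : ℕ) : ∑ i ∈ range N, (i:ℝ) * ((2:ℝ)⁻¹^i * F i) ≤ c₀' := by
  apply le_of_tendsto (x := 𝓝[<] (1:ℝ))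
    (f := fun x : ℝ => ∑ i ∈ range N, (i:ℝ) * ((2:ℝ)⁻¹^i * F i) * x^i)
  · have hc : Continuous (fun x : ℝ => ∑ i ∈ range N, (i:ℝ) * ((2:ℝ)⁻¹^i * F i) * x^i) := by
      apply continuous_finset_sum
      intro i _
      exact continuous_const.mul (continuous_pow i)
    have h2 := (hc.tendsto 1).mono_left (nhdsWithin_le_nhds (s := Set.Iio (1:ℝ)))
    simpa using h2
  · filter_upwards [self_mem_nhdsWithin,
      eventually_nhdsWithin_of_eventually_nhds (eventually_gt_nhds (by norm_num : (0:ℝ) < 1))]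
      with x hx1' hx0'
    have hxlt : x < 1 := hx1'
    have hx1 : x ≤ 1 := le_of_lt hxlt
    have hx0 : 0 ≤ x := le_of_lt hx0'
    have h1x : (0:ℝ) < 1 - x := by linarith
    have step1 : (1-x) * ∑ i ∈ range N, (i:ℝ) * ((2:ℝ)⁻¹^i * F i) * x^i
        ≤ ∑ i ∈ range N, (2:ℝ)⁻¹^i * F i * (1 - x^i) := by
      rw [mul_sum]
      apply sum_le_sum
      intro i _
      have hgb := geom_below hx0 hx1 i
      have hc : 0 ≤ (2:ℝ)⁻¹^i * F i := le_of_lt (mul_pos (pow_pos' i) (F_pos i))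
      calc (1-x) * ((i:ℝ) * ((2:ℝ)⁻¹^i * F i) * x^i)
          = ((2:ℝ)⁻¹^i * F i) * ((1-x) * i * x^i) := by ring
        _ ≤ ((2:ℝ)⁻¹^i * F i) * (1 - x^i) := mul_le_mul_of_nonneg_left hgb hc
        _ = (2:ℝ)⁻¹^i * F i * (1 - x^i) := by ring
    have step2 : ∑ i ∈ range N, (2:ℝ)⁻¹^i * F i * (1 - x^i)
        ≤ ∑' i : ℕ, (2:ℝ)⁻¹^i * F i * (1 - x^i) := by
      apply Summable.sum_le_tsum _ _ (summable_one_sub_pow hx0 hx1)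
      intro i _
      have hc : 0 ≤ (2:ℝ)⁻¹^i * F i := le_of_lt (mul_pos (pow_pos' i) (F_pos i))
      have : x ^ i ≤ 1 := pow_le_one₀ hx0 hx1
      nlinarith
    have step3 : ∑' i : ℕ, (2:ℝ)⁻¹^i * F i * (1 - x^i) ≤ (1-x) * c₀' := by
      rw [← one_sub_S_eq hx0 hx1]
      have := (S_bounds hx0 hx1).1
      have := sigma_le hx0 hx1
      linarith
    have hchain := le_trans step1 (le_trans step2 step3)
    have := (mul_le_mul_iff_right₀ h1x).1 hchain
    simpa using this

lemma summable_ia : Summable (fun i : ℕ => (i:ℝ) * ((2:ℝ)⁻¹^i * F i)) :=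
  summable_of_sum_range_le ia_nonneg partial_le

lemma tsum_ia_le : ∑' i : ℕ, (i:ℝ) * ((2:ℝ)⁻¹^i * F i) ≤ c₀' :=
  Summable.tsum_le_of_sum_range_le summable_ia partial_le

lemma c0'_le_tsum : c₀' ≤ ∑' i : ℕ, (i:ℝ) * ((2:ℝ)⁻¹^i * F i) := by
  set T : ℝ := ∑' i : ℕ, (i:ℝ) * ((2:ℝ)⁻¹^i * F i) with hT
  apply le_of_tendsto (x := 𝓝[<] (1:ℝ)) (f := fun x : ℝ => c₀' - (16/3) * (1-x))
  · have hc : Continuous (fun x : ℝ => c₀' - (16/3) * (1-x)) := by continuity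
    have h2 := (hc.tendsto 1).mono_left (nhdsWithin_le_nhds (s := Set.Iio (1:ℝ)))
    simpa using h2
  · filter_upwards [self_mem_nhdsWithin,
      eventually_nhdsWithin_of_eventually_nhds (eventually_gt_nhds (by norm_num : (0:ℝ) < 1))]
      with x hx1' hx0'
    have hxlt : x < 1 := hx1'
    have hx1 : x ≤ 1 := le_of_lt hxlt
    have hx0 : 0 ≤ x := le_of_lt hx0'
    have h1x : (0:ℝ) < 1 - x := by linarith
    have hσle : σ x ≤ (1-x) * c₀' := sigma_le hx0 hx1
    have hσge := sigma_ge hx0 hx1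
    have hσ0 := sigma_nonneg hx0 hx1
    have hc2 := c0'_le_two
    have h2x : σ x ≤ 2*(1-x) := by
      nlinarith [mul_le_mul_of_nonneg_left hc2 (le_of_lt h1x)]
    have hσ2 : (σ x)^2 ≤ 4 * (1-x)^2 := by
      nlinarith [mul_le_mul h2x h2x hσ0 (by linarith : (0:ℝ) ≤ 2*(1-x))]
    have hSb := (S_bounds hx0 hx1).2
    have hup : 1 - S x ≤ (1-x) * T := by
      rw [one_sub_S_eq hx0 hx1]
      have hterm : ∀ i : ℕ, (2:ℝ)⁻¹^i * F i * (1 - x^i) ≤ (1-x) * ((i:ℝ) * ((2:ℝ)⁻¹^i * F i)) := by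
        intro i
        have hb := bernoulli_above hx0 hx1 i
        have hc : 0 ≤ (2:ℝ)⁻¹^i * F i := le_of_lt (mul_pos (pow_pos' i) (F_pos i))
        calc (2:ℝ)⁻¹^i * F i * (1 - x^i) ≤ (2:ℝ)⁻¹^i * F i * ((i:ℝ) * (1-x)) :=
          mul_le_mul_of_nonneg_left hb hc
        _ = (1-x) * ((i:ℝ) * ((2:ℝ)⁻¹^i * F i)) := by ring
      calc ∑' i : ℕ, (2:ℝ)⁻¹^i * F i * (1 - x^i)
          ≤ ∑' i : ℕ, (1-x) * ((i:ℝ) * ((2:ℝ)⁻¹^i * F i)) :=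
            Summable.tsum_le_tsum hterm (summable_one_sub_pow hx0 hx1) (summable_ia.mul_left (1-x))
        _ = (1-x) * T := by rw [tsum_mul_left]
    have hfin : (1-x)*(c₀' - 16/3*(1-x)) ≤ (1-x)*T := by nlinarith [hup, hσge, hσ2, hSb]
    have := (mul_le_mul_iff_right₀ h1x).1 hfin
    linarith

lemma a_rw (i : ℕ) : a i = (2:ℝ)⁻¹^i * F i := by
  rw [a, F]
  congr 1
  · rw [zpow_neg, ← inv_zpow, zpow_natCast]
  · apply tprod_congr
    intro j
    congr 1
    have h : -((j:ℤ) + (i:ℤ) + 1) = -(((j + i + 1 : ℕ)):ℤ) := by push_cast; ring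
    rw [h, zpow_neg, ← inv_zpow, zpow_natCast]

lemma c0_eq : c₀ = c₀' := by
  rw [c₀, c₀']
  apply tsum_congr
  intro i
  have hB : (2:ℝ)^1 ≤ (2:ℝ)^(i+1) := pow_le_pow_right₀ (by norm_num) (by omega)
  have hB2 : (2:ℝ) ≤ 2^(i+1) := by simpa using hB
  have hBpos : (0:ℝ) < 2^(i+1) := by positivity
  have hiB : (2:ℝ)⁻¹^(i+1) = ((2:ℝ)^(i+1))⁻¹ := inv_pow 2 (i+1)
  have hinv : ((2:ℝ)^(i+1))⁻¹ ≤ 2⁻¹ := by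
    rw [inv_le_inv₀ hBpos (by norm_num)]
    exact hB2
  rw [hiB, div_eq_div_iff (ne_of_gt (by linarith : (0:ℝ) < 2^(i+1) - 1))
    (ne_of_gt (by linarith : (0:ℝ) < 1 - ((2:ℝ)^(i+1))⁻¹))]
  field_simp

end Uchi

/-- `∑_{i=0}^{∞} i · a_i = c₀`. -/
theorem tsum_i_mul_a : ∑' i : ℕ, (i : ℝ) * a i = c₀ := by
  have h1 : ∀ i : ℕ, (i : ℝ) * a i = (i:ℝ) * ((2:ℝ)⁻¹^i * Uchi.F i) :=
    fun i => by rw [Uchi.a_rw]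
  rw [tsum_congr h1, Uchi.c0_eq]
  exact le_antisymm Uchi.tsum_ia_le Uchi.c0'_le_tsum
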